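/- Let p be a prime number and let R = 𝔽_p[ε] be the ring of dual numbers over 𝔽_p = ℤ/pℤ (so ε² = 0). Let C be the ℤ-indexed cochain complex of R-modules with C^n = R for every n ∈ ℤ and with every differential C^n → C^{n+1} given by multiplication by ε. Then the endomorphism ring of C in the homotopy category K(Mod R) is a one-dimensional vector space over 𝔽_p; more precisely, there is a ring isomorphism End_{K(Mod R)}(C) ≅ 𝔽_p. -/

import Mathlib

open CategoryTheory CategoryTheory.Limits DualNumber

namespace Paper9

/-- The cochain complex of `R`-modules which is `R` in every degree and whose differentials
are all given by multiplication by a fixed element `r` with `r * r = 0`. -/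
noncomputable def Cx (R : Type) [CommRing R] (r : R) (h : r * r = 0) :
    CochainComplex (ModuleCat R) ℤ :=
  CochainComplex.of (fun _ => ModuleCat.of R R)
    (fun _ => ModuleCat.ofHom (r • LinearMap.id))
    (fun _ => by
      refine ModuleCat.hom_ext (LinearMap.ext fun x => ?_)
      show r • (r • x) = 0
      rw [smul_smul, h, zero_smul])

section U
variable {A : Type*} [AddCommGroup A]

def upos (b : ℤ → A) : ℕ → A
  | 0 => 0
  | (m+1) => b m - upos b m

def uneg (b : ℤ → A) : ℕ → A
  | 0 => b (-1)
  | (m+1) => b (Int.negSucc (m+1)) - uneg b m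

def u (b : ℤ → A) : ℤ → A
  | Int.ofNat m => upos b m
  | Int.negSucc m => uneg b m

lemma u_add (b : ℤ → A) (n : ℤ) : u b n + u b (n + 1) = b n := by
  match n with
  | Int.ofNat m =>
      show upos b m + upos b (m+1) = b m
      rw [upos]; abel
  | Int.negSucc 0 =>
      show uneg b 0 + upos b 0 = b (-1)
      rw [uneg, upos]; abel
  | Int.negSucc (m+1) =>
      show uneg b (m+1) + uneg b m = b (Int.negSucc (m+1))
      rw [uneg]; abel
end U

section Aux

variable (p : ℕ)

local notation "R" => DualNumber (ZMod p)
local notation "C" => Cx (DualNumber (ZMod p)) ε eps_mul_eps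

lemma d_eq (i : ℤ) : (C).d i (i+1) = ModuleCat.ofHom ((ε : R) • LinearMap.id) :=
  CochainComplex.of_d (fun _ => ModuleCat.of R R) (fun _ => ModuleCat.ofHom ((ε : R) • LinearMap.id)) i

lemma d_apply {i j : ℤ} (hij : i + 1 = j) (x : R) : ((C).d i j x : R) = ε * x := by
  subst hij
  rw [d_eq]
  rfl

/-- Multiplication by `a` as an endomorphism of the module `R`. -/
noncomputable def mulMap (a : R) : ModuleCat.of R R ⟶ ModuleCat.of R R :=
  ModuleCat.ofHom (a • LinearMap.id)

lemma mulMap_apply (a x : R) : (mulMap p a x : R) = a * x := rfl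

/-- The value of a chain map in degree `n`, as an element of `R`. -/
noncomputable def val (f : C ⟶ C) (n : ℤ) : R := f.f n (1 : R)

lemma f_apply (f : C ⟶ C) (n : ℤ) (x : R) : (f.f n x : R) = x * val p f n := by
  conv_lhs => rw [show x = x • (1 : R) by rw [smul_eq_mul, mul_one]]
  erw [LinearMap.map_smul]
  rfl

lemma eps_mul (x : R) : (ε : R) * x = TrivSqZeroExt.inr x.fst := by
  ext <;> simp

lemma val_fst_const (f : C ⟶ C) (n : ℤ) : (val p f n).fst = (val p f 0).fst := by
  have key : ∀ m : ℤ, (val p f m).fst = (val p f (m+1)).fst := by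
    intro m
    have h := f.comm m (m+1)
    have h2 : ((f.f m ≫ (C).d m (m+1)) (1:R) : R) = (((C).d m (m+1) ≫ f.f (m+1)) (1:R) : R) := by
      rw [h]
    have lhs : ((f.f m ≫ (C).d m (m+1)) (1:R) : R) = ε * val p f m := by
      show ((C).d m (m+1) (f.f m (1:R)) : R) = _
      erw [d_apply p rfl]
      rfl
    have rhs : (((C).d m (m+1) ≫ f.f (m+1)) (1:R) : R) = ε * val p f (m+1) := by
      show (f.f (m+1) ((C).d m (m+1) (1:R)) : R) = _
      erw [f_apply, d_apply p rfl, mul_one, mul_comm]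
    erw [lhs, rhs, eps_mul, eps_mul] at h2
    exact TrivSqZeroExt.inr_injective h2
  induction n using Int.induction_on with
  | zero => rfl
  | succ k ih => rw [← key k, ih]
  | pred k ih => rw [key (-k-1)]; norm_num; rw [ih]

/-- the scalar attached to a chain map -/
noncomputable def phi (f : C ⟶ C) : ZMod p := (val p f 0).fst

lemma fst_map_eps_mul (h : R →ₗ[R] R) (x : R) : (h (ε * x)).fst = 0 := by
  have hx : (ε * x : R) = (ε : R) • x := rfl
  rw [hx, map_smul]
  show ((ε : R) * (h x : R)).fst = 0
  rw [eps_mul]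
  simp

lemma phi_eq_of_homotopy (f g : C ⟶ C) (H : Homotopy f g) : phi p f = phi p g := by
  have h := H.comm 0
  have h1 : (f.f 0 (1:R) : R) =
      (dNext 0 H.hom) (1:R) + (prevD 0 H.hom) (1:R) + g.f 0 (1:R) := by
    rw [h]; rfl
  have e1 : ((dNext 0 H.hom) (1:R) : R).fst = 0 := by
    rw [dNext_eq H.hom (show (ComplexShape.up ℤ).Rel 0 (0+1) by simp)]
    show ((H.hom (0+1) 0) ((C).d 0 (0+1) (1:R)) : R).fst = 0
    rw [show ((C).d 0 (0+1) (1:R) : R) = ε * 1 from d_apply p rfl 1]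
    exact fst_map_eps_mul p (H.hom (0+1) 0).hom 1
  have e2 : ((prevD 0 H.hom) (1:R) : R).fst = 0 := by
    rw [prevD_eq H.hom (show (ComplexShape.up ℤ).Rel (0-1) 0 by simp)]
    show (((C).d (0-1) 0) ((H.hom 0 (0-1)) (1:R)) : R).fst = 0
    erw [d_apply p (show (0:ℤ)-1+1 = 0 by ring)]
    erw [eps_mul]
    simp
  show (f.f 0 (1:R) : R).fst = (g.f 0 (1:R) : R).fst
  rw [h1]
  erw [TrivSqZeroExt.fst_add, TrivSqZeroExt.fst_add, e1, e2]
  simp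

/-- `f` is homotopic to multiplication by the constant `inl (phi f)`. -/
noncomputable def homotopySelf (f : C ⟶ C) :
    Homotopy f ((TrivSqZeroExt.inl (phi p f) : R) • 𝟙 (C)) where
  hom i j :=
    if h : j + 1 = i then mulMap p (TrivSqZeroExt.inl (u (fun n => (val p f n).snd) i)) else 0
  zero i j hij := dif_neg hij
  comm i := by
    rw [dNext_eq _ (show (ComplexShape.up ℤ).Rel i (i+1) by simp),
        prevD_eq _ (show (ComplexShape.up ℤ).Rel (i-1) i by simp)]
    erw [dif_pos (show i + 1 = i + 1 from rfl), dif_pos (show (i-1) + 1 = i by ring)]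
    set u0 : ZMod p := u (fun n => (val p f n).snd) i with hu0
    set u1 : ZMod p := u (fun n => (val p f n).snd) (i+1) with hu1
    have hval : (TrivSqZeroExt.inl u1 : R) * ε + ε * (TrivSqZeroExt.inl u0 : R)
        + (TrivSqZeroExt.inl (phi p f) : R) = val p f i := by
      rw [mul_comm (TrivSqZeroExt.inl u1 : R) ε, eps_mul, eps_mul]
      rw [show ((TrivSqZeroExt.inl u1 : R)).fst = u1 from rfl,
          show ((TrivSqZeroExt.inl u0 : R)).fst = u0 from rfl]
      rw [← TrivSqZeroExt.inr_add, add_comm u1 u0, hu0, hu1,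
          u_add (fun n => (val p f n).snd) i]
      rw [show phi p f = (val p f i).fst from (val_fst_const p f i).symm]
      rw [add_comm]
      exact TrivSqZeroExt.inl_fst_add_inr_snd_eq (val p f i)
    refine ModuleCat.hom_ext (LinearMap.ext_ring ?_)
    have t1 : ((mulMap p (TrivSqZeroExt.inl u1)) ((C).d i (i+1) (1:R)) : R)
        = (TrivSqZeroExt.inl u1 : R) * ε := by
      erw [show ((C).d i (i+1) (1:R) : R) = ε * 1 from d_apply p rfl 1, mulMap_apply, mul_one]
    have t2 : (((C).d (i-1) i) ((mulMap p (TrivSqZeroExt.inl u0)) (1:R)) : R)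
        = ε * (TrivSqZeroExt.inl u0 : R) := by
      rw [show ((mulMap p (TrivSqZeroExt.inl u0)) (1:R) : R)
          = (TrivSqZeroExt.inl u0 : R) from by rw [mulMap_apply, mul_one]]
      exact d_apply p (by ring) _
    have t3 : ((((TrivSqZeroExt.inl (phi p f) : R) • 𝟙 (C)).f i) (1:R) : R)
        = (TrivSqZeroExt.inl (phi p f) : R) := by
      rw [HomologicalComplex.smul_f_apply, HomologicalComplex.id_f]
      show (TrivSqZeroExt.inl (phi p f) : R) • ((1 : R)) = _
      rw [smul_eq_mul, mul_one]
    show val p f i =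
      (show R from (mulMap p (TrivSqZeroExt.inl u1)) ((C).d i (i+1) (1:R)))
        + (show R from ((C).d (i-1) i) ((mulMap p (TrivSqZeroExt.inl u0)) (1:R)))
        + (show R from (((TrivSqZeroExt.inl (phi p f) : R) • 𝟙 (C)).f i) (1:R))
    erw [t1, t2, t3, hval]

local notation "Q" => HomotopyCategory.quotient (ModuleCat (DualNumber (ZMod p))) (ComplexShape.up ℤ)

/-- The scalar attached to a morphism in the homotopy category. -/
noncomputable def Phi (x : (Q).obj (C) ⟶ (Q).obj (C)) : ZMod p := phi p (Quot.out x)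

lemma Phi_map (f : C ⟶ C) : Phi p ((Q).map f) = phi p f :=
  phi_eq_of_homotopy p _ f
    (HomotopyCategory.homotopyOfEq _ _ (by erw [HomotopyCategory.quotient_map_out]))

/-- The inverse map. -/
noncomputable def Psi (c : ZMod p) : (Q).obj (C) ⟶ (Q).obj (C) :=
  (Q).map ((TrivSqZeroExt.inl c : R) • 𝟙 (C))

lemma Psi_Phi (x : (Q).obj (C) ⟶ (Q).obj (C)) : Psi p (Phi p x) = x := by
  conv_rhs => rw [← HomotopyCategory.quotient_map_out x]
  exact (HomotopyCategory.eq_of_homotopy _ _ (homotopySelf p (Quot.out x))).symm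

lemma val_smul_id (c : ZMod p) :
    val p ((TrivSqZeroExt.inl c : R) • 𝟙 (C)) 0 = (TrivSqZeroExt.inl c : R) := by
  show (((TrivSqZeroExt.inl c : R) • 𝟙 (C)).f 0) (1:R) = _
  rw [HomologicalComplex.smul_f_apply, HomologicalComplex.id_f]
  show (TrivSqZeroExt.inl c : R) • (1 : R) = _
  rw [smul_eq_mul, mul_one]

lemma Phi_Psi (c : ZMod p) : Phi p (Psi p c) = c := by
  rw [Psi, Phi_map]
  show (val p ((TrivSqZeroExt.inl c : R) • 𝟙 (C)) 0).fst = c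
  rw [val_smul_id]
  rfl

lemma phi_comp (f g : C ⟶ C) : phi p (f ≫ g) = phi p f * phi p g := by
  show (val p (f ≫ g) 0).fst = _
  have : val p (f ≫ g) 0 = val p f 0 * val p g 0 := by
    show (g.f 0 (f.f 0 (1:R)) : R) = _
    erw [f_apply p g 0]
    rfl
  rw [this, TrivSqZeroExt.fst_mul]
  rfl

lemma phi_add (f g : C ⟶ C) : phi p (f + g) = phi p f + phi p g := by
  show (val p (f + g) 0).fst = _
  have : val p (f + g) 0 = val p f 0 + val p g 0 := rfl
  rw [this, TrivSqZeroExt.fst_add]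
  rfl

end Aux
/-- Let `p` be a prime and `R = 𝔽_p[ε]` the ring of dual numbers over `𝔽_p = ℤ/pℤ` (so
`ε² = 0`). The endomorphism ring, in the homotopy category `K(Mod R)`, of the complex `C`
which is `R` in every degree with all differentials given by multiplication by `ε`, is
isomorphic as a ring to `𝔽_p`; in particular it is a one-dimensional `𝔽_p`-vector space. -/
theorem statement9 (p : ℕ) [Fact p.Prime] :
    Nonempty
      (End ((HomotopyCategory.quotient (ModuleCat (DualNumber (ZMod p)))
          (ComplexShape.up ℤ)).obj
        (Cx (DualNumber (ZMod p)) ε eps_mul_eps)) ≃+* ZMod p) := by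
  refine ⟨{
    toFun := Phi p
    invFun := Psi p
    left_inv := Psi_Phi p
    right_inv := Phi_Psi p
    map_mul' := ?_
    map_add' := ?_ }⟩
  · intro x y
    show Phi p (x * y) = Phi p x * Phi p y
    rw [End.mul_def]
    conv_lhs => erw [← HomotopyCategory.quotient_map_out x,
      ← HomotopyCategory.quotient_map_out y, ← Functor.map_comp]
    erw [Phi_map, phi_comp, mul_comm]
    rfl
  · intro x y
    show Phi p (x + y) = Phi p x + Phi p y
    conv_lhs => erw [← HomotopyCategory.quotient_map_out x,
      ← HomotopyCategory.quotient_map_out y, ← Functor.map_add]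
    erw [Phi_map, phi_add]
    rfl


end Paper9
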